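/- Let A be a random N×N symmetric matrix with zero diagonal whose off-diagonal entries are a_{ij} = B_{ij} w_{ij}, where {B_{ij} = B_{ji}, i<j} are i.i.d. Bernoulli(p) and w_{ij} = w_{ji} ≥ 0 are deterministic. Then for any deterministic symmetric positive semidefinite Q, E[A^T Q A] = p² W^T Q W + p(1−p)(W^T ∘ Q ∘ W − diag(W^T ∘ Q ∘ W)) + p(1−p) diag(W^T diag(Q) W), where W = (w_{ij}), ∘ is the Hadamard product, and diag(·) extracts/forms the diagonal. -/

import Mathlib

open MeasureTheory ProbabilityTheory Matrix

/-- The diagonal matrix with the same diagonal as `M`. -/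
def diagPart {N : ℕ} (M : Matrix (Fin N) (Fin N) ℝ) : Matrix (Fin N) (Fin N) ℝ :=
  Matrix.diagonal fun i => M i i

/-- Second moment of the random adjacency matrix (Corollary 2, model (ii)):
for `A = B ∘ W` with i.i.d. Bernoulli(p) edge activations,
`E[Aᵀ Q A] = p² Wᵀ Q W + p(1−p)(Wᵀ∘Q∘W − diag(Wᵀ∘Q∘W)) + p(1−p) diag(Wᵀ diag(Q) W)`. -/
theorem expected_AQA
    {Ω : Type*} [MeasurableSpace Ω] (μ : Measure Ω) [IsProbabilityMeasure μ]
    (N : ℕ) (p : ℝ) (hp0 : 0 ≤ p) (hp1 : p ≤ 1)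
    (W : Matrix (Fin N) (Fin N) ℝ)
    (hWsym : W.IsSymm) (hWnonneg : ∀ i j, 0 ≤ W i j) (hWdiag : ∀ i, W i i = 0)
    (B : Fin N → Fin N → Ω → ℝ)
    (hBmeas : ∀ i j, Measurable (B i j))
    (hBsym : ∀ i j, B i j = B j i)
    (hB01 : ∀ i j ω, B i j ω = 0 ∨ B i j ω = 1)
    (hBmean : ∀ i j, i ≠ j → ∫ ω, B i j ω ∂μ = p)
    (hBindep : iIndepFun
      (fun q : {q : Fin N × Fin N // q.1 < q.2} => B q.val.1 q.val.2) μ)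
    (A : Ω → Matrix (Fin N) (Fin N) ℝ)
    (hA : ∀ ω i j, A ω i j = B i j ω * W i j)
    (Q : Matrix (Fin N) (Fin N) ℝ) (hQ : Q.PosSemidef) :
    (Matrix.of fun i j => ∫ ω, ((A ω)ᵀ * Q * A ω) i j ∂μ) =
      p ^ 2 • (Wᵀ * Q * W)
        + (p * (1 - p)) • (Wᵀ ⊙ Q ⊙ W - diagPart (Wᵀ ⊙ Q ⊙ W))
        + (p * (1 - p)) • diagPart (Wᵀ * diagPart Q * W) := by
  classical
  have hQs : ∀ i j, Q j i = Q i j := fun i j => by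
    simpa using hQ.1.apply i j
  have hInt : ∀ (f : Ω → ℝ), Measurable f → (∀ ω, f ω = 0 ∨ f ω = 1) → Integrable f μ := by
    intro f hf h01
    refine (integrable_const (1 : ℝ)).mono' hf.aestronglyMeasurable ?_
    filter_upwards with ω
    rcases h01 ω with h | h <;> simp [h]
  have hPint : ∀ k i l j, Integrable (fun ω => B k i ω * B l j ω) μ := by
    intro k i l j
    refine hInt _ ((hBmeas k i).mul (hBmeas l j)) (fun ω => ?_)
    rcases hB01 k i ω with h | h <;> rcases hB01 l j ω with h' | h' <;> simp [h, h']
  have sortB : ∀ k i : Fin N, k ≠ i → ∃ q : {q : Fin N × Fin N // q.1 < q.2},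
      B k i = B q.val.1 q.val.2 ∧ ((q.val.1 = k ∧ q.val.2 = i) ∨ (q.val.1 = i ∧ q.val.2 = k)) := by
    intro k i h
    rcases h.lt_or_gt with h' | h'
    · exact ⟨⟨(k, i), h'⟩, rfl, Or.inl ⟨rfl, rfl⟩⟩
    · exact ⟨⟨(i, k), h'⟩, hBsym k i, Or.inr ⟨rfl, rfl⟩⟩
  have hE : ∀ k i l j : Fin N, k ≠ i → l ≠ j →
      ∫ ω, B k i ω * B l j ω ∂μ =
        if (k = l ∧ i = j) ∨ (k = j ∧ i = l) then p else p ^ 2 := by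
    intro k i l j hki hlj
    by_cases hc : (k = l ∧ i = j) ∨ (k = j ∧ i = l)
    · rw [if_pos hc]
      have hfun : B l j = B k i := by
        rcases hc with ⟨h1, h2⟩ | ⟨h1, h2⟩
        · rw [h1, h2]
        · rw [← h1, ← h2, hBsym]
      rw [hfun]
      have hsq : ∀ ω, B k i ω * B k i ω = B k i ω := fun ω => by
        rcases hB01 k i ω with h | h <;> simp [h]
      simp_rw [hsq]
      exact hBmean k i hki
    · rw [if_neg hc]
      obtain ⟨q, hq, hqd⟩ := sortB k i hki
      obtain ⟨r, hr, hrd⟩ := sortB l j hlj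
      have hne : q ≠ r := by
        rintro rfl
        apply hc
        rcases hqd with ⟨h1, h2⟩ | ⟨h1, h2⟩ <;> rcases hrd with ⟨h3, h4⟩ | ⟨h3, h4⟩
        · exact Or.inl ⟨h1.symm.trans h3, h2.symm.trans h4⟩
        · exact Or.inr ⟨h1.symm.trans h3, h2.symm.trans h4⟩
        · exact Or.inr ⟨h2.symm.trans h4, h1.symm.trans h3⟩
        · exact Or.inl ⟨h2.symm.trans h4, h1.symm.trans h3⟩
      have hind := hBindep.indepFun hne
      rw [hq, hr]
      have h2 : ∫ ω, B q.val.1 q.val.2 ω * B r.val.1 r.val.2 ω ∂μ =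
          (∫ ω, B q.val.1 q.val.2 ω ∂μ) * ∫ ω, B r.val.1 r.val.2 ω ∂μ :=
        IndepFun.integral_mul_eq_mul_integral hind (hBmeas _ _).aestronglyMeasurable
          (hBmeas _ _).aestronglyMeasurable
      rw [h2, hBmean _ _ (ne_of_lt q.2), hBmean _ _ (ne_of_lt r.2), sq]
  ext i j
  have hLHS : (∫ ω, ((A ω)ᵀ * Q * A ω) i j ∂μ)
      = ∑ l, ∑ k, (W k i * Q k l * W l j) * ∫ ω, B k i ω * B l j ω ∂μ := by
    have h1 : ∀ ω, ((A ω)ᵀ * Q * A ω) i j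
        = ∑ l, ∑ k, (W k i * Q k l * W l j) * (B k i ω * B l j ω) := by
      intro ω
      rw [Matrix.mul_apply]
      simp_rw [Matrix.mul_apply, Matrix.transpose_apply, hA, Finset.sum_mul]
      exact Finset.sum_congr rfl fun l _ => Finset.sum_congr rfl fun k _ => by ring
    simp_rw [h1]
    rw [integral_finset_sum _
      (fun l _ => integrable_finset_sum _ (fun k _ => (hPint k i l j).const_mul _))]
    refine Finset.sum_congr rfl fun l _ => ?_
    rw [integral_finset_sum _ (fun k _ => (hPint k i l j).const_mul _)]
    exact Finset.sum_congr rfl fun k _ => integral_const_mul _ _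
  have hterm : ∀ l k : Fin N, (W k i * Q k l * W l j) * (∫ ω, B k i ω * B l j ω ∂μ)
      = p ^ 2 * (W k i * Q k l * W l j)
        + (p - p ^ 2) * (if (k = l ∧ i = j) ∨ (k = j ∧ i = l)
            then W k i * Q k l * W l j else 0) := by
    intro l k
    by_cases hki : k = i
    · subst hki; simp [hWdiag]
    · by_cases hlj : l = j
      · subst hlj; simp [hWdiag]
      · rw [hE k i l j hki hlj]
        by_cases hc : (k = l ∧ i = j) ∨ (k = j ∧ i = l)
        · rw [if_pos hc, if_pos hc]; ring
        · rw [if_neg hc, if_neg hc]; ring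
  have hsplit : (∫ ω, ((A ω)ᵀ * Q * A ω) i j ∂μ)
      = p ^ 2 * (∑ l, ∑ k, W k i * Q k l * W l j)
        + (p - p ^ 2) * ∑ l, ∑ k,
            (if (k = l ∧ i = j) ∨ (k = j ∧ i = l) then W k i * Q k l * W l j else 0) := by
    rw [hLHS]
    simp_rw [hterm, Finset.sum_add_distrib, Finset.mul_sum]
  have hS : (Wᵀ * Q * W) i j = ∑ l, ∑ k, W k i * Q k l * W l j := by
    rw [Matrix.mul_apply]
    simp_rw [Matrix.mul_apply, Matrix.transpose_apply, Finset.sum_mul]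
  rcases eq_or_ne i j with rfl | hij
  · -- diagonal case
    have hT : (∑ l, ∑ k, if (k = l ∧ i = i) ∨ (k = i ∧ i = l)
          then W k i * Q k l * W l i else 0)
        = ∑ l, W l i * Q l l * W l i := by
      refine Finset.sum_congr rfl fun l _ => ?_
      have h : ∀ k : Fin N, (if (k = l ∧ i = i) ∨ (k = i ∧ i = l)
            then W k i * Q k l * W l i else 0)
          = if k = l then W k i * Q k l * W l i else 0 := by
        intro k
        by_cases hkl : k = l
        · simp [hkl]
        · rw [if_neg hkl, if_neg]
          rintro (⟨h, -⟩ | ⟨h1, h2⟩)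
          · exact hkl h
          · exact hkl (h1.trans h2)
      rw [Finset.sum_congr rfl fun k _ => h k]
      simp
    have hD : (Wᵀ * diagPart Q * W) i i = ∑ l, W l i * Q l l * W l i := by
      rw [Matrix.mul_apply]
      refine Finset.sum_congr rfl fun l _ => ?_
      simp [diagPart, Matrix.mul_apply, Matrix.diagonal_apply, mul_ite, ite_mul]
    have hdp : ∀ M : Matrix (Fin N) (Fin N) ℝ, diagPart M i i = M i i := fun M => by
      simp [diagPart]
    simp only [Matrix.of_apply, Matrix.add_apply, Matrix.smul_apply, Matrix.sub_apply,
      smul_eq_mul, hdp]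
    rw [hsplit, ← hS, hT, ← hD]
    ring
  · -- off-diagonal case
    have hT : (∑ l, ∑ k, if (k = l ∧ i = j) ∨ (k = j ∧ i = l)
          then W k i * Q k l * W l j else 0)
        = W j i * Q j i * W i j := by
      have h : ∀ l k : Fin N, ((k = l ∧ i = j) ∨ (k = j ∧ i = l)) ↔ (k = j ∧ l = i) := by
        intro l k
        constructor
        · rintro (⟨-, h⟩ | ⟨h1, h2⟩)
          · exact absurd h hij
          · exact ⟨h1, h2.symm⟩
        · rintro ⟨h1, h2⟩; exact Or.inr ⟨h1, h2.symm⟩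
      simp_rw [h, ite_and]
      rw [Finset.sum_comm]
      simp
    simp only [Matrix.of_apply, Matrix.add_apply, Matrix.smul_apply, Matrix.sub_apply,
      smul_eq_mul, Matrix.hadamard_apply, Matrix.transpose_apply]
    have hdp : ∀ M : Matrix (Fin N) (Fin N) ℝ, diagPart M i j = 0 := fun M => by
      simp [diagPart, Matrix.diagonal_apply_ne _ hij]
    rw [hdp, hdp]
    rw [hsplit, ← hS, hT, hQs]
    ring
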